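/- Let t ∈ ℝ be such that |cos(t/2)| ≠ |sin(t/2)|. Then lim_{n→∞} (1/n) · ln |(cos(t/2))ⁿ + (−i·sin(t/2))ⁿ| = ln max(|cos(t/2)|, |sin(t/2)|). (The dynamical free energy density F(t) = −lim (1/n) ln|Z^R(t)| of the d = 1 Ising model exists and equals −ln max(|cos(t/2)|, |sin(t/2)|) away from the critical times t_k = (2k+1)π/2, at which this limiting function is non-analytic — the dynamical phase transition.) -/

import Mathlib

private lemma abs_sub_le_abs_add (x y : ℂ) :
    ‖x‖ - ‖y‖ ≤ ‖x + y‖ := by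
  have h := norm_add_le (x + y) (-y)
  simp only [add_neg_cancel_right, norm_neg] at h
  linarith

theorem ising_1d_dynamical_free_energy (t : ℝ)
    (h : |Real.cos (t / 2)| ≠ |Real.sin (t / 2)|) :
    Filter.Tendsto
      (fun n : ℕ => (1 / (n : ℝ)) *
        Real.log ‖
          ((Real.cos (t / 2) : ℂ) ^ n + (-Complex.I * (Real.sin (t / 2) : ℂ)) ^ n)‖)
      Filter.atTop
      (nhds (Real.log (max |Real.cos (t / 2)| |Real.sin (t / 2)|))) := by
  set a := Real.cos (t / 2) with ha
  set b := Real.sin (t / 2) with hb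
  set M := max |a| |b| with hM
  set m := min |a| |b| with hm
  have hmM : m < M := min_lt_max.mpr h
  have hm0 : 0 ≤ m := le_min (abs_nonneg a) (abs_nonneg b)
  have hMpos : 0 < M := lt_of_le_of_lt hm0 hmM
  set r := m / M with hr
  have hr0 : 0 ≤ r := div_nonneg hm0 hMpos.le
  have hr1 : r < 1 := (div_lt_one hMpos).mpr hmM
  -- abs of the two terms
  have habs1 : ∀ n : ℕ, ‖(a : ℂ) ^ n‖ = |a| ^ n := by
    intro n; rw [norm_pow, Complex.norm_real, Real.norm_eq_abs]
  have habs2 : ∀ n : ℕ, ‖(-Complex.I * (b : ℂ)) ^ n‖ = |b| ^ n := by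
    intro n
    rw [norm_pow, norm_mul, norm_neg, Complex.norm_I, one_mul, Complex.norm_real, Real.norm_eq_abs]
  have key : ∀ n : ℕ,
      M ^ n - m ^ n ≤ ‖(a : ℂ) ^ n + (-Complex.I * (b : ℂ)) ^ n‖ ∧
      ‖(a : ℂ) ^ n + (-Complex.I * (b : ℂ)) ^ n‖ ≤ M ^ n + m ^ n := by
    intro n
    have hupper := norm_add_le ((a : ℂ) ^ n) ((-Complex.I * (b : ℂ)) ^ n)
    have hl1 := abs_sub_le_abs_add ((a : ℂ) ^ n) ((-Complex.I * (b : ℂ)) ^ n)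
    have hl2 := abs_sub_le_abs_add ((-Complex.I * (b : ℂ)) ^ n) ((a : ℂ) ^ n)
    rw [add_comm] at hl2
    rw [habs1, habs2] at hupper hl1 hl2
    rcases le_total |a| |b| with hab | hab
    · have hMeq : M = |b| := max_eq_right hab
      have hmeq : m = |a| := min_eq_left hab
      rw [hMeq, hmeq]
      exact ⟨hl2, by linarith⟩
    · have hMeq : M = |a| := max_eq_left hab
      have hmeq : m = |b| := min_eq_right hab
      rw [hMeq, hmeq]
      exact ⟨hl1, hupper⟩
  -- bounding sequences
  have hrpow : ∀ n : ℕ, m ^ n = M ^ n * r ^ n := by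
    intro n
    rw [hr, div_pow, mul_div_cancel₀]
    exact pow_ne_zero _ hMpos.ne'
  have hrn1 : ∀ n : ℕ, n ≠ 0 → r ^ n < 1 := fun n hn => pow_lt_one₀ hr0 hr1 hn
  -- limits of the bounding sequences
  have hrlim : Filter.Tendsto (fun n : ℕ => r ^ n) Filter.atTop (nhds 0) :=
    tendsto_pow_atTop_nhds_zero_of_lt_one hr0 hr1
  have hinv : Filter.Tendsto (fun n : ℕ => (1 : ℝ) / n) Filter.atTop (nhds 0) :=
    tendsto_one_div_atTop_nhds_zero_nat
  have hglim : ∀ s : ℝ, Filter.Tendsto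
      (fun n : ℕ => Real.log M + (1 / (n : ℝ)) * Real.log (1 + s * r ^ n))
      Filter.atTop (nhds (Real.log M)) := by
    intro s
    have h1 : Filter.Tendsto (fun n : ℕ => (1 : ℝ) + s * r ^ n) Filter.atTop (nhds 1) := by
      have := (hrlim.const_mul s).const_add (1 : ℝ)
      simpa using this
    have h2 : Filter.Tendsto (fun n : ℕ => Real.log (1 + s * r ^ n)) Filter.atTop
        (nhds 0) := by
      have := h1.log one_ne_zero
      simpa using this
    have h3 := hinv.mul h2
    rw [mul_zero] at h3
    simpa using h3.const_add (Real.log M)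
  -- squeeze
  apply tendsto_of_tendsto_of_tendsto_of_le_of_le' (hglim (-1)) (hglim 1)
  · filter_upwards [Filter.eventually_ge_atTop 1] with n hn
    have hn0 : (n : ℝ) ≠ 0 := Nat.cast_ne_zero.mpr (by omega)
    have hnpos : (0 : ℝ) < n := by positivity
    have hlow := (key n).1
    rw [hrpow] at hlow
    have hpos : 0 < M ^ n * (1 + (-1) * r ^ n) := by
      have := hrn1 n (by omega)
      have : 0 < 1 + (-1) * r ^ n := by linarith
      positivity
    have hle : Real.log (M ^ n * (1 + (-1) * r ^ n)) ≤
        Real.log (‖(a : ℂ) ^ n + (-Complex.I * (b : ℂ)) ^ n‖) := by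
      apply Real.log_le_log hpos
      nlinarith [(key n).1, hrpow n]
    have heq : Real.log (M ^ n * (1 + (-1) * r ^ n)) =
        n * Real.log M + Real.log (1 + (-1) * r ^ n) := by
      rw [Real.log_mul (by positivity) (by nlinarith [hpos, pow_pos hMpos n]),
        Real.log_pow]
    have : Real.log M + (1 / (n : ℝ)) * Real.log (1 + (-1) * r ^ n) =
        (1 / (n : ℝ)) * Real.log (M ^ n * (1 + (-1) * r ^ n)) := by
      rw [heq]; field_simp
    rw [this]
    exact mul_le_mul_of_nonneg_left hle (by positivity)
  · filter_upwards [Filter.eventually_ge_atTop 1] with n hn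
    have hn0 : (n : ℝ) ≠ 0 := Nat.cast_ne_zero.mpr (by omega)
    have hnpos : (0 : ℝ) < n := by positivity
    have hup := (key n).2
    have habspos : 0 < ‖(a : ℂ) ^ n + (-Complex.I * (b : ℂ)) ^ n‖ := by
      have := hrn1 n (by omega)
      have h1 : 0 < M ^ n * (1 - r ^ n) := by
        have : 0 < 1 - r ^ n := by linarith
        positivity
      nlinarith [(key n).1, hrpow n]
    have hle : Real.log (‖(a : ℂ) ^ n + (-Complex.I * (b : ℂ)) ^ n‖) ≤
        Real.log (M ^ n * (1 + 1 * r ^ n)) := by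
      apply Real.log_le_log habspos
      nlinarith [hrpow n]
    have heq : Real.log (M ^ n * (1 + 1 * r ^ n)) =
        n * Real.log M + Real.log (1 + 1 * r ^ n) := by
      rw [Real.log_mul (by positivity)
        (by nlinarith [pow_nonneg hr0 n]), Real.log_pow]
    have : Real.log M + (1 / (n : ℝ)) * Real.log (1 + 1 * r ^ n) =
        (1 / (n : ℝ)) * Real.log (M ^ n * (1 + 1 * r ^ n)) := by
      rw [heq]; field_simp
    rw [this]
    exact mul_le_mul_of_nonneg_left hle (by positivity)
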